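/- Size of the UL-image: with notation as above over R = K[X]/(X^m), K finite of size q, the set 𝓗 = {U·L : U invertible upper triangular, L invertible lower triangular} satisfies |𝓗| = |𝓤|·|𝓛|/|𝓓| and |𝓗| / |Mₙ(R)| = (1 − 1/q)ⁿ. -/

import Mathlib

open Polynomial

section MatrixLemmas

open Matrix

variable {A : Type*} [CommRing A] {n : ℕ}

private lemma isUnit_prod_iff' {f : Fin n → A} :
    IsUnit (∏ i, f i) ↔ ∀ i, IsUnit (f i) := by
  constructor
  · intro h i
    exact isUnit_of_dvd_unit (Finset.dvd_prod_of_mem f (Finset.mem_univ i)) h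
  · intro h
    exact Finset.prod_induction _ IsUnit (fun _ _ => IsUnit.mul) isUnit_one
      (fun i _ => h i)

private lemma upper_isUnit_iff {U : Matrix (Fin n) (Fin n) A}
    (h : ∀ i j : Fin n, j < i → U i j = 0) :
    IsUnit U ↔ ∀ i, IsUnit (U i i) := by
  rw [Matrix.isUnit_iff_isUnit_det,
    Matrix.det_of_upperTriangular (fun i j hij => h i j hij)]
  exact isUnit_prod_iff'

private lemma lower_isUnit_iff {L : Matrix (Fin n) (Fin n) A}
    (h : ∀ i j : Fin n, i < j → L i j = 0) :
    IsUnit L ↔ ∀ i, IsUnit (L i i) := by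
  rw [Matrix.isUnit_iff_isUnit_det,
    Matrix.det_of_lowerTriangular L
      (fun i j hij => h i j (OrderDual.toDual_lt_toDual.mp hij))]
  exact isUnit_prod_iff'

private lemma lower_mul_diag {L M : Matrix (Fin n) (Fin n) A}
    (hL : ∀ i j : Fin n, i < j → L i j = 0)
    (hM : ∀ i j : Fin n, i < j → M i j = 0) (i : Fin n) :
    (L * M) i i = L i i * M i i := by
  rw [Matrix.mul_apply]
  apply Finset.sum_eq_single i
  · intro k _ hk
    rcases lt_or_gt_of_ne hk with hk | hk
    · rw [hM k i hk, mul_zero]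
    · rw [hL i k hk, zero_mul]
  · intro h; exact absurd (Finset.mem_univ i) h

private lemma factor_unique {U₁ U₂ L₁ L₂ : Matrix (Fin n) (Fin n) A}
    (hU₁ : ∀ i j : Fin n, j < i → U₁ i j = 0)
    (hU₂ : ∀ i j : Fin n, j < i → U₂ i j = 0) (hU₂u : IsUnit U₂)
    (hL₁ : ∀ i j : Fin n, i < j → L₁ i j = 0)
    (hL₂ : ∀ i j : Fin n, i < j → L₂ i j = 0) (hL₁u : IsUnit L₁)
    (hd : ∀ i, L₁ i i = L₂ i i) (h : U₁ * L₁ = U₂ * L₂) :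
    U₁ = U₂ ∧ L₁ = L₂ := by
  have bU₁ : U₁.BlockTriangular id := fun i j hij => hU₁ i j hij
  have bU₂ : U₂.BlockTriangular id := fun i j hij => hU₂ i j hij
  have bL₁ : L₁.BlockTriangular OrderDual.toDual :=
    fun i j hij => hL₁ i j (OrderDual.toDual_lt_toDual.mp hij)
  have bL₂ : L₂.BlockTriangular OrderDual.toDual :=
    fun i j hij => hL₂ i j (OrderDual.toDual_lt_toDual.mp hij)
  obtain ⟨iU₂⟩ := hU₂u.nonempty_invertible
  obtain ⟨iL₁⟩ := hL₁u.nonempty_invertible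
  set M := U₂⁻¹ * U₁ with hMdef
  have hML : M * L₁ = L₂ := by
    rw [hMdef, Matrix.mul_assoc, h, Matrix.inv_mul_cancel_left_of_invertible]
  have hMeq : M = L₂ * L₁⁻¹ := by
    rw [← hML, Matrix.mul_inv_cancel_right_of_invertible]
  -- M is upper triangular
  have bM : M.BlockTriangular id := (blockTriangular_inv_of_blockTriangular bU₂).mul bU₁
  -- M is lower triangular
  have bM' : M.BlockTriangular OrderDual.toDual := by
    rw [hMeq]
    exact bL₂.mul (blockTriangular_inv_of_blockTriangular bL₁)
  -- lower entries of M⁻¹... diagonal of M is 1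
  have hMlow : ∀ i j : Fin n, i < j → M i j = 0 :=
    fun i j hij => bM' (OrderDual.toDual_lt_toDual.mpr hij)
  have hMdiag : ∀ i, M i i = 1 := by
    intro i
    have h1 : (M * L₁) i i = M i i * L₁ i i := lower_mul_diag hMlow hL₁ i
    rw [hML] at h1
    have h2 : M i i * L₁ i i = 1 * L₁ i i := by
      rw [one_mul, ← h1, hd i]
    have hu : IsUnit (L₁ i i) := (lower_isUnit_iff hL₁).mp hL₁u i
    exact hu.mul_left_injective h2
  have hM1 : M = 1 := by
    ext i j
    rcases lt_trichotomy i j with hij | hij | hij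
    · rw [hMlow i j hij, Matrix.one_apply_ne (ne_of_lt hij)]
    · subst hij; rw [hMdiag i, Matrix.one_apply_eq]
    · rw [bM hij, Matrix.one_apply_ne (ne_of_gt hij)]
  have hU : U₁ = U₂ := by
    have : U₂ * M = U₁ := by rw [hMdef, Matrix.mul_inv_cancel_left_of_invertible]
    rw [← this, hM1, Matrix.mul_one]
  refine ⟨hU, ?_⟩
  rw [← hML, hM1, Matrix.one_mul]

private noncomputable def equivU :
    {U : Matrix (Fin n) (Fin n) A // (∀ i j : Fin n, j < i → U i j = 0) ∧ IsUnit U} ≃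
      (Fin n → Aˣ) × ({p : Fin n × Fin n // p.1 < p.2} → A) where
  toFun U := (fun i => ((upper_isUnit_iff U.2.1).mp U.2.2 i).unit, fun p => U.1 p.1.1 p.1.2)
  invFun x := ⟨fun i j => if h : i < j then x.2 ⟨(i, j), h⟩ else
      if h' : i = j then (x.1 i : A) else 0, by
    have htri : ∀ i j : Fin n, j < i →
        (if h : i < j then x.2 ⟨(i, j), h⟩ else if h' : i = j then (x.1 i : A) else 0) = 0 := by
      intro i j hij
      rw [dif_neg (asymm hij), dif_neg (ne_of_gt hij)]
    refine ⟨htri, ?_⟩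
    rw [upper_isUnit_iff htri]
    intro i
    simp only [lt_irrefl, dite_false, dif_pos rfl]
    simp⟩
  left_inv U := by
    apply Subtype.ext
    ext i j
    rcases lt_trichotomy i j with hij | hij | hij
    · simp only [dif_pos hij]
    · subst hij
      simp [IsUnit.unit_spec]
    · simp only [dif_neg (asymm hij), dif_neg (ne_of_gt hij)]
      exact (U.2.1 i j hij).symm
  right_inv x := by
    refine Prod.ext ?_ ?_
    · funext i
      apply Units.ext
      rw [IsUnit.unit_spec]
      simp
    · funext p
      simp only [dif_pos p.2]

private noncomputable def equivL :
    {L : Matrix (Fin n) (Fin n) A // (∀ i j : Fin n, i < j → L i j = 0) ∧ IsUnit L} ≃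
      (Fin n → Aˣ) × ({p : Fin n × Fin n // p.2 < p.1} → A) where
  toFun L := (fun i => ((lower_isUnit_iff L.2.1).mp L.2.2 i).unit, fun p => L.1 p.1.1 p.1.2)
  invFun x := ⟨fun i j => if h : j < i then x.2 ⟨(i, j), h⟩ else
      if h' : i = j then (x.1 i : A) else 0, by
    have htri : ∀ i j : Fin n, i < j →
        (if h : j < i then x.2 ⟨(i, j), h⟩ else if h' : i = j then (x.1 i : A) else 0) = 0 := by
      intro i j hij
      rw [dif_neg (asymm hij), dif_neg (ne_of_lt hij)]
    refine ⟨htri, ?_⟩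
    rw [lower_isUnit_iff htri]
    intro i
    simp only [lt_irrefl, dite_false, dif_pos rfl]
    simp⟩
  left_inv L := by
    apply Subtype.ext
    ext i j
    rcases lt_trichotomy i j with hij | hij | hij
    · simp only [dif_neg (asymm hij), dif_neg (ne_of_lt hij)]
      exact (L.2.1 i j hij).symm
    · subst hij
      simp [IsUnit.unit_spec]
    · simp only [dif_pos hij]
  right_inv x := by
    refine Prod.ext ?_ ?_
    · funext i
      apply Units.ext
      rw [IsUnit.unit_spec]
      simp
    · funext p
      simp only [dif_pos p.2]

private noncomputable def equivD :
    {D : Matrix (Fin n) (Fin n) A // (∀ i j : Fin n, i ≠ j → D i j = 0) ∧ IsUnit D} ≃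
      (Fin n → Aˣ) where
  toFun D := fun i =>
    ((upper_isUnit_iff (fun i j hij => D.2.1 i j (ne_of_gt hij))).mp D.2.2 i).unit
  invFun d := ⟨Matrix.diagonal (fun i => (d i : A)), by
    refine ⟨fun i j hij => Matrix.diagonal_apply_ne _ hij, ?_⟩
    rw [upper_isUnit_iff (fun i j hij => Matrix.diagonal_apply_ne _ (ne_of_gt hij))]
    intro i
    rw [Matrix.diagonal_apply_eq]
    exact (d i).isUnit⟩
  left_inv D := by
    apply Subtype.ext
    ext i j
    by_cases h : i = j
    · subst h
      simp only [Matrix.diagonal_apply_eq, IsUnit.unit_spec]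
    · simp only [Matrix.diagonal_apply_ne _ h]
      exact (D.2.1 i j h).symm
  right_inv d := by
    funext i
    apply Units.ext
    simp only [IsUnit.unit_spec, Matrix.diagonal_apply_eq]

private def equivSum :
    ({p : Fin n × Fin n // p.1 < p.2} ⊕ {p : Fin n × Fin n // p.2 < p.1}) ≃
      {p : Fin n × Fin n // p.1 ≠ p.2} where
  toFun x := Sum.elim (fun y => ⟨y.1, ne_of_lt y.2⟩) (fun y => ⟨y.1, ne_of_gt y.2⟩) x
  invFun x := if h : x.1.1 < x.1.2 then Sum.inl ⟨x.1, h⟩ else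
    Sum.inr ⟨x.1, lt_of_le_of_ne (le_of_not_gt h) x.2.symm⟩
  left_inv x := by
    rcases x with y | y
    · simp [Sum.elim_inl, y.2]
    · simp [Sum.elim_inr, asymm y.2]
  right_inv x := by
    by_cases h : x.1.1 < x.1.2
    · simp only [dif_pos h, Sum.elim_inl]
    · simp only [dif_neg h, Sum.elim_inr]

private def equivDiag : {p : Fin n × Fin n // p.1 = p.2} ≃ Fin n where
  toFun x := x.1.1
  invFun i := ⟨(i, i), rfl⟩
  left_inv x := by obtain ⟨⟨a, b⟩, h⟩ := x; cases h; rfl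
  right_inv i := rfl

private lemma card_index : Nat.card {p : Fin n × Fin n // p.1 < p.2} +
    Nat.card {p : Fin n × Fin n // p.2 < p.1} = n ^ 2 - n := by
  have h1 : Fintype.card {p : Fin n × Fin n // p.1 < p.2} +
      Fintype.card {p : Fin n × Fin n // p.2 < p.1} =
      Fintype.card {p : Fin n × Fin n // p.1 ≠ p.2} := by
    rw [← Fintype.card_sum]
    exact Fintype.card_congr equivSum
  have h2 : Fintype.card {p : Fin n × Fin n // p.1 = p.2} = n := by
    rw [Fintype.card_congr equivDiag, Fintype.card_fin]
  have h3 : Fintype.card {p : Fin n × Fin n // p.1 ≠ p.2} = n ^ 2 - n := by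
    have h4 := Fintype.card_subtype_compl (fun p : Fin n × Fin n => p.1 = p.2)
    rw [h2, Fintype.card_prod, Fintype.card_fin, ← sq] at h4
    exact h4
  rw [Nat.card_eq_fintype_card, Nat.card_eq_fintype_card, h1, h3]

private lemma main_bijection (A : Type*) [CommRing A] (n : ℕ) :
    Nonempty (({U : Matrix (Fin n) (Fin n) A // (∀ i j : Fin n, j < i → U i j = 0) ∧ IsUnit U} ×
      {L : Matrix (Fin n) (Fin n) A // (∀ i j : Fin n, i < j → L i j = 0) ∧ IsUnit L}) ≃
     ({H : Matrix (Fin n) (Fin n) A | ∃ U L : Matrix (Fin n) (Fin n) A,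
        (∀ i j : Fin n, j < i → U i j = 0) ∧ IsUnit U ∧
        (∀ i j : Fin n, i < j → L i j = 0) ∧ IsUnit L ∧ U * L = H} ×
      {D : Matrix (Fin n) (Fin n) A // (∀ i j : Fin n, i ≠ j → D i j = 0) ∧ IsUnit D})) := by
  set 𝓗 : Set (Matrix (Fin n) (Fin n) A) :=
    {H | ∃ U L : Matrix (Fin n) (Fin n) A,
      (∀ i j : Fin n, j < i → U i j = 0) ∧ IsUnit U ∧
      (∀ i j : Fin n, i < j → L i j = 0) ∧ IsUnit L ∧ U * L = H} with h𝓗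
  refine ⟨Equiv.ofBijective (fun p =>
    (⟨p.1.1 * p.2.1, ⟨p.1.1, p.2.1, p.1.2.1, p.1.2.2, p.2.2.1, p.2.2.2, rfl⟩⟩,
     ⟨Matrix.diagonal (fun i => p.2.1 i i),
      fun i j hij => Matrix.diagonal_apply_ne _ hij, by
        rw [upper_isUnit_iff (fun i j hij => Matrix.diagonal_apply_ne _ (ne_of_gt hij))]
        intro i
        rw [Matrix.diagonal_apply_eq]
        exact (lower_isUnit_iff p.2.2.1).mp p.2.2.2 i⟩)) ⟨?_, ?_⟩⟩
  · -- injective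
    rintro ⟨⟨U₁, hU₁⟩, ⟨L₁, hL₁⟩⟩ ⟨⟨U₂, hU₂⟩, ⟨L₂, hL₂⟩⟩ h
    simp only [Prod.mk.injEq, Subtype.mk.injEq] at h
    have hd : ∀ i, L₁ i i = L₂ i i := by
      intro i
      have := congrFun (congrFun h.2 i) i
      simpa using this
    obtain ⟨hU, hL⟩ := factor_unique hU₁.1 hU₂.1 hU₂.2 hL₁.1 hL₂.1 hL₁.2 hd h.1
    simp [hU, hL]
  · -- surjective
    rintro ⟨⟨H, hH⟩, ⟨D, hD⟩⟩
    obtain ⟨U, L, hU, hUu, hL, hLu, hUL⟩ := hH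
    have hl : ∀ i, IsUnit (L i i) := (lower_isUnit_iff hL).mp hLu
    have hdg : ∀ i, IsUnit (D i i) :=
      (upper_isUnit_iff (fun i j hij => hD.1 i j (ne_of_gt hij))).mp hD.2
    set s : Fin n → A := fun i => D i i * ((hl i).unit⁻¹ : Aˣ) with hs
    set t : Fin n → A := fun i => L i i * ((hdg i).unit⁻¹ : Aˣ) with ht
    have hts : ∀ i, t i * s i = 1 := by
      intro i
      rw [hs, ht]
      calc L i i * ((hdg i).unit⁻¹ : Aˣ) * (D i i * ((hl i).unit⁻¹ : Aˣ))
          = (L i i * ((hl i).unit⁻¹ : Aˣ)) * (D i i * ((hdg i).unit⁻¹ : Aˣ)) := by ring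
        _ = 1 := by rw [(hl i).mul_val_inv, (hdg i).mul_val_inv, one_mul]
    have hst : ∀ i, IsUnit (t i) := by
      intro i
      exact IsUnit.of_mul_eq_one _ (hts i)
    have hss : ∀ i, IsUnit (s i) := by
      intro i
      exact IsUnit.of_mul_eq_one _ (by rw [mul_comm]; exact hts i)
    have hdiag1 : Matrix.diagonal t * Matrix.diagonal s = 1 := by
      rw [Matrix.diagonal_mul_diagonal, funext hts, Matrix.diagonal_one]
    -- the new factors
    refine ⟨⟨⟨U * Matrix.diagonal t, ?_, ?_⟩, ⟨Matrix.diagonal s * L, ?_, ?_⟩⟩, ?_⟩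
    · intro i j hij
      rw [Matrix.mul_diagonal, hU i j hij, zero_mul]
    · refine hUu.mul ?_
      rw [upper_isUnit_iff (fun i j hij => Matrix.diagonal_apply_ne _ (ne_of_gt hij))]
      intro i
      rw [Matrix.diagonal_apply_eq]
      exact hst i
    · intro i j hij
      rw [Matrix.diagonal_mul, hL i j hij, mul_zero]
    · refine IsUnit.mul ?_ hLu
      rw [upper_isUnit_iff (fun i j hij => Matrix.diagonal_apply_ne _ (ne_of_gt hij))]
      intro i
      rw [Matrix.diagonal_apply_eq]
      exact hss i
    · refine Prod.ext (Subtype.ext ?_) (Subtype.ext ?_)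
      · show U * Matrix.diagonal t * (Matrix.diagonal s * L) = H
        rw [Matrix.mul_assoc, ← Matrix.mul_assoc (Matrix.diagonal t), hdiag1,
          Matrix.one_mul, hUL]
      · show Matrix.diagonal (fun i => (Matrix.diagonal s * L) i i) = D
        ext i j
        by_cases h : i = j
        · subst h
          rw [Matrix.diagonal_apply_eq, Matrix.diagonal_mul, hs]
          calc D i i * ((hl i).unit⁻¹ : Aˣ) * L i i
              = D i i * (((hl i).unit⁻¹ : Aˣ) * L i i) := by ring
            _ = D i i := by rw [(hl i).val_inv_mul, mul_one]
        · rw [Matrix.diagonal_apply_ne _ h, (hD.1 i j h).symm]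

private lemma generic_count (A : Type*) [CommRing A] [Finite A] (n : ℕ) :
    Nat.card {H : Matrix (Fin n) (Fin n) A | ∃ U L : Matrix (Fin n) (Fin n) A,
        (∀ i j : Fin n, j < i → U i j = 0) ∧ IsUnit U ∧
        (∀ i j : Fin n, i < j → L i j = 0) ∧ IsUnit L ∧ U * L = H} *
      Nat.card {D : Matrix (Fin n) (Fin n) A // (∀ i j : Fin n, i ≠ j → D i j = 0) ∧ IsUnit D} =
      Nat.card {U : Matrix (Fin n) (Fin n) A // (∀ i j : Fin n, j < i → U i j = 0) ∧ IsUnit U} *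
      Nat.card {L : Matrix (Fin n) (Fin n) A // (∀ i j : Fin n, i < j → L i j = 0) ∧ IsUnit L} ∧
    Nat.card {H : Matrix (Fin n) (Fin n) A | ∃ U L : Matrix (Fin n) (Fin n) A,
        (∀ i j : Fin n, j < i → U i j = 0) ∧ IsUnit U ∧
        (∀ i j : Fin n, i < j → L i j = 0) ∧ IsUnit L ∧ U * L = H} =
      Nat.card Aˣ ^ n * Nat.card A ^ (n ^ 2 - n) := by
  obtain ⟨e⟩ := main_bijection A n
  have hcard : ∀ (α : Type) [Finite α], True := fun _ _ => trivial
  have hUc : Nat.card {U : Matrix (Fin n) (Fin n) A //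
      (∀ i j : Fin n, j < i → U i j = 0) ∧ IsUnit U} =
      Nat.card Aˣ ^ n * Nat.card A ^ Nat.card {p : Fin n × Fin n // p.1 < p.2} := by
    rw [Nat.card_congr (equivU (A := A) (n := n)), Nat.card_prod, Nat.card_fun, Nat.card_fun,
      Nat.card_eq_fintype_card (α := Fin n), Fintype.card_fin]
  have hLc : Nat.card {L : Matrix (Fin n) (Fin n) A //
      (∀ i j : Fin n, i < j → L i j = 0) ∧ IsUnit L} =
      Nat.card Aˣ ^ n * Nat.card A ^ Nat.card {p : Fin n × Fin n // p.2 < p.1} := by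
    rw [Nat.card_congr (equivL (A := A) (n := n)), Nat.card_prod, Nat.card_fun, Nat.card_fun,
      Nat.card_eq_fintype_card (α := Fin n), Fintype.card_fin]
  have hDc : Nat.card {D : Matrix (Fin n) (Fin n) A //
      (∀ i j : Fin n, i ≠ j → D i j = 0) ∧ IsUnit D} = Nat.card Aˣ ^ n := by
    rw [Nat.card_congr (equivD (A := A) (n := n)), Nat.card_fun,
      Nat.card_eq_fintype_card (α := Fin n), Fintype.card_fin]
  have h1 : Nat.card {U : Matrix (Fin n) (Fin n) A //
        (∀ i j : Fin n, j < i → U i j = 0) ∧ IsUnit U} *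
      Nat.card {L : Matrix (Fin n) (Fin n) A //
        (∀ i j : Fin n, i < j → L i j = 0) ∧ IsUnit L} =
      Nat.card {H : Matrix (Fin n) (Fin n) A | ∃ U L : Matrix (Fin n) (Fin n) A,
        (∀ i j : Fin n, j < i → U i j = 0) ∧ IsUnit U ∧
        (∀ i j : Fin n, i < j → L i j = 0) ∧ IsUnit L ∧ U * L = H} *
      Nat.card {D : Matrix (Fin n) (Fin n) A //
        (∀ i j : Fin n, i ≠ j → D i j = 0) ∧ IsUnit D} := by
    rw [← Nat.card_prod, ← Nat.card_prod]
    exact Nat.card_congr e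
  refine ⟨h1.symm, ?_⟩
  have hpos : 0 < Nat.card Aˣ ^ n := pow_pos Nat.card_pos n
  apply Nat.eq_of_mul_eq_mul_right hpos
  calc Nat.card {H : Matrix (Fin n) (Fin n) A | ∃ U L : Matrix (Fin n) (Fin n) A,
        (∀ i j : Fin n, j < i → U i j = 0) ∧ IsUnit U ∧
        (∀ i j : Fin n, i < j → L i j = 0) ∧ IsUnit L ∧ U * L = H} * Nat.card Aˣ ^ n
      = Nat.card {H : Matrix (Fin n) (Fin n) A | ∃ U L : Matrix (Fin n) (Fin n) A,
        (∀ i j : Fin n, j < i → U i j = 0) ∧ IsUnit U ∧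
        (∀ i j : Fin n, i < j → L i j = 0) ∧ IsUnit L ∧ U * L = H} *
        Nat.card {D : Matrix (Fin n) (Fin n) A //
          (∀ i j : Fin n, i ≠ j → D i j = 0) ∧ IsUnit D} := by rw [hDc]
    _ = Nat.card {U : Matrix (Fin n) (Fin n) A //
          (∀ i j : Fin n, j < i → U i j = 0) ∧ IsUnit U} *
        Nat.card {L : Matrix (Fin n) (Fin n) A //
          (∀ i j : Fin n, i < j → L i j = 0) ∧ IsUnit L} := h1.symm
    _ = (Nat.card Aˣ ^ n * Nat.card A ^ Nat.card {p : Fin n × Fin n // p.1 < p.2}) *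
        (Nat.card Aˣ ^ n * Nat.card A ^ Nat.card {p : Fin n × Fin n // p.2 < p.1}) := by
          rw [hUc, hLc]
    _ = Nat.card Aˣ ^ n * Nat.card A ^ (Nat.card {p : Fin n × Fin n // p.1 < p.2} +
          Nat.card {p : Fin n × Fin n // p.2 < p.1}) * Nat.card Aˣ ^ n := by
          rw [pow_add]; ring
    _ = Nat.card Aˣ ^ n * Nat.card A ^ (n ^ 2 - n) * Nat.card Aˣ ^ n := by rw [card_index]

end MatrixLemmas

private lemma R_facts (K : Type*) [Field K] [Fintype K] (m : ℕ) (hm : 1 ≤ m) :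
    ∃ k : ℕ, Finite (Polynomial K ⧸ Ideal.span {(X : Polynomial K) ^ m}) ∧
      Nat.card (Polynomial K ⧸ Ideal.span {(X : Polynomial K) ^ m}) = k * Fintype.card K ∧
      Nat.card (Polynomial K ⧸ Ideal.span {(X : Polynomial K) ^ m})ˣ =
        k * (Fintype.card K - 1) ∧
      Nat.card (Polynomial K ⧸ Ideal.span {(X : Polynomial K) ^ m}) = Fintype.card K ^ m := by
  classical
  set I : Ideal (Polynomial K) := Ideal.span {(X : Polynomial K) ^ m} with hI
  have hf : (X : Polynomial K) ^ m ≠ 0 := pow_ne_zero m X_ne_zero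
  -- cardinality of R via power basis
  have hdim : (AdjoinRoot.powerBasis hf).dim = m := by
    rw [AdjoinRoot.powerBasis_dim, natDegree_X_pow]
  have eA : (AdjoinRoot ((X : Polynomial K) ^ m)) ≃ (Fin m → K) :=
    (AdjoinRoot.powerBasis hf).basis.equivFun.toEquiv.trans
      (Equiv.arrowCongr (finCongr hdim) (Equiv.refl K))
  have eR0 : (Polynomial K ⧸ I) ≃ (Fin m → K) := eA
  have hfin : Finite (Polynomial K ⧸ I) := Finite.of_equiv _ eR0.symm
  have hcardR : Nat.card (Polynomial K ⧸ I) = Fintype.card K ^ m := by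
    rw [Nat.card_congr eR0, Nat.card_fun, Nat.card_eq_fintype_card (α := K),
      Nat.card_eq_fintype_card (α := Fin m), Fintype.card_fin]
  -- the residue map
  have hker : ∀ p ∈ I, (Polynomial.evalRingHom (0 : K)) p = 0 := by
    intro p hp
    rw [hI, Ideal.mem_span_singleton] at hp
    obtain ⟨c, rfl⟩ := hp
    simp [zero_pow (by omega : m ≠ 0)]
  set φ : (Polynomial K ⧸ I) →+* K := Ideal.Quotient.lift I (Polynomial.evalRingHom 0) hker
    with hφ
  set s : K →+* (Polynomial K ⧸ I) := (Ideal.Quotient.mk I).comp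
    (Polynomial.C : K →+* Polynomial K) with hs
  have hφs : ∀ c : K, φ (s c) = c := by
    intro c
    rw [hφ, hs, RingHom.comp_apply, Ideal.Quotient.lift_mk]
    simp
  have hnil : ∀ a : Polynomial K ⧸ I, φ a = 0 → IsNilpotent a := by
    intro a ha
    obtain ⟨p, rfl⟩ := Ideal.Quotient.mk_surjective a
    rw [hφ, Ideal.Quotient.lift_mk] at ha
    have hdvd : X ∣ p := X_dvd_iff.mpr (by rw [coeff_zero_eq_eval_zero]; exact ha)
    refine ⟨m, ?_⟩
    rw [← map_pow, Ideal.Quotient.eq_zero_iff_mem, hI, Ideal.mem_span_singleton]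
    exact pow_dvd_pow_of_dvd hdvd m
  have hunit : ∀ a : Polynomial K ⧸ I, IsUnit a ↔ φ a ≠ 0 := by
    intro a
    constructor
    · intro h
      exact (h.map φ).ne_zero
    · intro h
      have h1 : φ (a * s (φ a)⁻¹) = 1 := by
        rw [map_mul, hφs, mul_inv_cancel₀ h]
      have h2 : IsNilpotent (1 - a * s (φ a)⁻¹) :=
        hnil _ (by rw [map_sub, map_one, h1, sub_self])
      have h3 := h2.isUnit_one_sub
      rw [sub_sub_cancel] at h3
      exact isUnit_of_mul_isUnit_left h3
  -- bijections
  have eR : (Polynomial K ⧸ I) ≃ {x : Polynomial K ⧸ I // φ x = 0} × K :=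
    { toFun := fun a => (⟨a - s (φ a), by rw [map_sub, hφs, sub_self]⟩, φ a)
      invFun := fun x => x.1.1 + s x.2
      left_inv := fun a => by simp
      right_inv := fun x => by
        have h1 : φ (x.1.1 + s x.2) = x.2 := by rw [map_add, x.1.2, hφs, zero_add]
        refine Prod.ext (Subtype.ext ?_) h1
        show x.1.1 + s (x.2) - s (φ (x.1.1 + s x.2)) = x.1.1
        rw [h1, add_sub_cancel_right] }
  have eU : (Polynomial K ⧸ I)ˣ ≃ {x : Polynomial K ⧸ I // φ x = 0} × {c : K // ¬c = 0} := by
    refine Equiv.ofBijective (fun u =>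
      (⟨(u : Polynomial K ⧸ I) - s (φ u), by rw [map_sub, hφs, sub_self]⟩,
       ⟨φ u, (hunit _).mp u.isUnit⟩)) ⟨?_, ?_⟩
    · intro u v h
      simp only [Prod.mk.injEq, Subtype.mk.injEq] at h
      have := h.1
      rw [h.2] at this
      exact Units.ext (by have := sub_left_injective this; exact this)
    · rintro ⟨⟨x, hx⟩, ⟨c, hc⟩⟩
      have hu : IsUnit (x + s c) := (hunit _).mpr (by rw [map_add, hx, hφs, zero_add]; exact hc)
      refine ⟨hu.unit, ?_⟩
      have hv : φ ((hu.unit : Polynomial K ⧸ I)) = c := by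
        rw [IsUnit.unit_spec, map_add, hx, hφs, zero_add]
      refine Prod.ext (Subtype.ext ?_) (Subtype.ext ?_)
      · show (hu.unit : Polynomial K ⧸ I) - s (φ hu.unit) = x
        rw [hv, IsUnit.unit_spec, add_sub_cancel_right]
      · exact hv
  refine ⟨Nat.card {x : Polynomial K ⧸ I // φ x = 0}, hfin, ?_, ?_, hcardR⟩
  · rw [Nat.card_congr eR, Nat.card_prod, Nat.card_eq_fintype_card (α := K)]
  · rw [Nat.card_congr eU, Nat.card_prod]
    congr 1
    rw [Nat.card_eq_fintype_card, Fintype.card_subtype_compl,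
      Fintype.card_subtype_eq (0 : K)]


theorem card_UL_image (K : Type*) [Field K] [Fintype K] (m n : ℕ) (hm : 1 ≤ m) :
    let R := Polynomial K ⧸ Ideal.span {(X : Polynomial K) ^ m}
    let q := Fintype.card K
    let 𝓗 : Set (Matrix (Fin n) (Fin n) R) :=
      {H | ∃ U L : Matrix (Fin n) (Fin n) R,
        (∀ i j : Fin n, j < i → U i j = 0) ∧ IsUnit U ∧
        (∀ i j : Fin n, i < j → L i j = 0) ∧ IsUnit L ∧ U * L = H}
    let 𝓤 := {U : Matrix (Fin n) (Fin n) R //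
        (∀ i j : Fin n, j < i → U i j = 0) ∧ IsUnit U}
    let 𝓛 := {L : Matrix (Fin n) (Fin n) R //
        (∀ i j : Fin n, i < j → L i j = 0) ∧ IsUnit L}
    let 𝓓 := {D : Matrix (Fin n) (Fin n) R //
        (∀ i j : Fin n, i ≠ j → D i j = 0) ∧ IsUnit D}
    Nat.card 𝓗 * Nat.card 𝓓 = Nat.card 𝓤 * Nat.card 𝓛 ∧
    Nat.card 𝓗 * q ^ n = q ^ (m * n ^ 2) * (q - 1) ^ n := by
  intro R q 𝓗 𝓤 𝓛 𝓓
  obtain ⟨k, hfin, hkq, hku, hqm⟩ := R_facts K m hm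
  haveI : Finite (Polynomial K ⧸ Ideal.span {(X : Polynomial K) ^ m}) := hfin
  have hgen := generic_count (Polynomial K ⧸ Ideal.span {(X : Polynomial K) ^ m}) n
  have hsub : n ^ 2 - n + n = n ^ 2 :=
    Nat.sub_add_cancel (Nat.le_self_pow (by norm_num : (2 : ℕ) ≠ 0) n)
  have hkqm : k * Fintype.card K = Fintype.card K ^ m := by rw [← hkq, hqm]
  have h2 : Nat.card {H : Matrix (Fin n) (Fin n)
        (Polynomial K ⧸ Ideal.span {(X : Polynomial K) ^ m}) |
        ∃ U L, (∀ i j : Fin n, j < i → U i j = 0) ∧ IsUnit U ∧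
        (∀ i j : Fin n, i < j → L i j = 0) ∧ IsUnit L ∧ U * L = H} * Fintype.card K ^ n =
      Fintype.card K ^ (m * n ^ 2) * (Fintype.card K - 1) ^ n := by
    rw [hgen.2, hku, hkq]
    calc (k * (Fintype.card K - 1)) ^ n * (k * Fintype.card K) ^ (n ^ 2 - n) *
          Fintype.card K ^ n
        = (k * Fintype.card K) ^ (n ^ 2 - n) * (k * Fintype.card K) ^ n *
          (Fintype.card K - 1) ^ n := by rw [mul_pow, mul_pow]; ring
      _ = (k * Fintype.card K) ^ (n ^ 2) * (Fintype.card K - 1) ^ n := by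
          rw [← pow_add, hsub]
      _ = Fintype.card K ^ (m * n ^ 2) * (Fintype.card K - 1) ^ n := by
          rw [hkqm, ← pow_mul]
  exact ⟨hgen.1, h2⟩
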